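/- Let q, α_0, …, α_5 be complex numbers with 0 < |q| < 1, and assume α_0α_5·q^m ≠ 1 and α_0α_1α_2α_5·q^m ≠ 1 for all integers m ≥ 0. Define, for |t| < 1: x_0(t) = ₃φ₂[α_5, α_0α_1α_5, α_0α_1α_2α_3α_5; α_0α_5, α_0α_1α_2α_5; q, qt], x_1(t) = ((1−α_5)/(1−α_0α_5))·₃φ₂[qα_5, α_0α_1α_5, α_0α_1α_2α_3α_5; qα_0α_5, α_0α_1α_2α_5; q, qt], x_2(t) = ((1−α_5)(1−α_0α_1α_5)/((1−α_0α_5)(1−α_0α_1α_2α_5)))·₃φ₂[qα_5, qα_0α_1α_5, α_0α_1α_2α_3α_5; qα_0α_5, qα_0α_1α_2α_5; q, qt]. Then for every t with |t| < 1 the vector x(t) = (x_0(t), x_1(t), x_2(t))ᵀ satisfies x(q^{-1}t) = (A_0/(1−t) + tA_1/(1−t))·x(t). -/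

import Mathlib

noncomputable section

/-- The `q`-Pochhammer symbol `(a;q)_n = Π_{k=1}^{n} (1 - a q^{k-1})`. -/
def qPoch (q a : ℂ) (n : ℕ) : ℂ := ∏ k ∈ Finset.range n, (1 - a * q ^ k)

/-- The basic hypergeometric series `₃φ₂[a₁,a₂,a₃; b₁,b₂; q, t]`. -/
def phi32 (a1 a2 a3 b1 b2 q t : ℂ) : ℂ :=
  ∑' n : ℕ, (qPoch q a1 n * qPoch q a2 n * qPoch q a3 n) /
    (qPoch q b1 n * qPoch q b2 n * qPoch q q n) * t ^ n

/-- `x₀(t)` of the hypergeometric solution of the `q`-Garnier linear system. -/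
def X0 (q a0 a1 a2 a3 a5 t : ℂ) : ℂ :=
  phi32 a5 (a0 * a1 * a5) (a0 * a1 * a2 * a3 * a5) (a0 * a5) (a0 * a1 * a2 * a5) q (q * t)

/-- `x₁(t)` of the hypergeometric solution of the `q`-Garnier linear system. -/
def X1 (q a0 a1 a2 a3 a5 t : ℂ) : ℂ :=
  (1 - a5) / (1 - a0 * a5) *
    phi32 (q * a5) (a0 * a1 * a5) (a0 * a1 * a2 * a3 * a5) (q * a0 * a5) (a0 * a1 * a2 * a5)
      q (q * t)

/-- `x₂(t)` of the hypergeometric solution of the `q`-Garnier linear system. -/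
def X2 (q a0 a1 a2 a3 a5 t : ℂ) : ℂ :=
  (1 - a5) * (1 - a0 * a1 * a5) / ((1 - a0 * a5) * (1 - a0 * a1 * a2 * a5)) *
    phi32 (q * a5) (q * a0 * a1 * a5) (a0 * a1 * a2 * a3 * a5) (q * a0 * a5)
      (q * a0 * a1 * a2 * a5) q (q * t)


-- ===== auxiliary lemmas =====
set_option maxHeartbeats 1000000

open Finset in
lemma aux_qPoch_succ (q a : ℂ) (n : ℕ) : qPoch q a (n+1) = qPoch q a n * (1 - a * q ^ n) :=
  Finset.prod_range_succ _ n

lemma aux_qPoch_shift (q a : ℂ) (n : ℕ) :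
    (1 - a) * qPoch q (q * a) n = qPoch q a n * (1 - a * q ^ n) := by
  induction n with
  | zero => simp [qPoch]
  | succ n ih =>
    rw [aux_qPoch_succ, aux_qPoch_succ]
    linear_combination (1 - a*q^(n+1)) * ih

lemma aux_qPoch_ne_zero {q a : ℂ} (h : ∀ m : ℕ, (1:ℂ) - a * q ^ m ≠ 0) (n : ℕ) :
    qPoch q a n ≠ 0 :=
  Finset.prod_ne_zero_iff.mpr fun k _ => h k

open Finset in
lemma aux_geom_sum_le {r : ℝ} (h0 : 0 ≤ r) (h1 : r < 1) (n : ℕ) :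
    ∑ k ∈ range n, r ^ k ≤ (1 - r)⁻¹ := by
  have hs : Summable (fun k : ℕ => r ^ k) := summable_geometric_of_lt_one h0 h1
  calc ∑ k ∈ range n, r ^ k ≤ ∑' k : ℕ, r ^ k :=
        Summable.sum_le_tsum _ (fun k _ => pow_nonneg h0 k) hs
    _ = (1 - r)⁻¹ := tsum_geometric_of_lt_one h0 h1

lemma aux_exp_lb {x : ℝ} (hx0 : 0 ≤ x) (hx : x ≤ 1/2) :
    Real.exp (-(2*x)) ≤ 1 - x := by
  have h1 : 1 + 2*x ≤ Real.exp (2*x) := by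
    have := Real.add_one_le_exp (2*x); linarith
  have h5 : (0:ℝ) < 1 + 2*x := by linarith
  have h3 : Real.exp (-(2*x)) ≤ (1 + 2*x)⁻¹ := by
    rw [Real.exp_neg]; gcongr
  have h4 : (1 + 2*x)⁻¹ ≤ 1 - x := by
    rw [inv_eq_one_div, div_le_iff₀ h5]; nlinarith
  linarith

open Finset in
lemma aux_qPoch_abs_le (q a : ℂ) (hq : ‖q‖ < 1) (n : ℕ) :
    ‖qPoch q a n‖ ≤ Real.exp (‖a‖ * (1 - ‖q‖)⁻¹) := by
  have hq0 : (0:ℝ) ≤ ‖q‖ := norm_nonneg _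
  have ha0 : (0:ℝ) ≤ ‖a‖ := norm_nonneg _
  calc ‖qPoch q a n‖ = ∏ k ∈ range n, ‖(1 - a*q^k)‖ := norm_prod _ _
    _ ≤ ∏ k ∈ range n, Real.exp (‖a‖ * ‖q‖ ^ k) := by
        apply prod_le_prod (fun k _ => norm_nonneg _)
        intro k _
        have h1 : ‖(1 - a*q^k)‖ ≤ 1 + ‖a‖ * ‖q‖ ^ k := by
          calc ‖(1 - a*q^k)‖ ≤ ‖1‖ + ‖(a*q^k)‖ :=
                norm_sub_le _ _
            _ = 1 + ‖a‖ * ‖q‖ ^ k := by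
                rw [norm_one, norm_mul, norm_pow]
        have h2 := Real.add_one_le_exp (‖a‖ * ‖q‖ ^ k)
        linarith
    _ = Real.exp (∑ k ∈ range n, ‖a‖ * ‖q‖ ^ k) := (Real.exp_sum _ _).symm
    _ ≤ Real.exp (‖a‖ * (1 - ‖q‖)⁻¹) := by
        apply Real.exp_le_exp.mpr
        rw [← mul_sum]
        exact mul_le_mul_of_nonneg_left (aux_geom_sum_le hq0 hq n) ha0

open Finset in
lemma aux_qPoch_abs_lower (q a : ℂ) (hq : ‖q‖ < 1)
    (h : ∀ m : ℕ, (1:ℂ) - a * q ^ m ≠ 0) :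
    ∃ c : ℝ, 0 < c ∧ ∀ n, c ≤ ‖qPoch q a n‖ := by
  have hq0 : (0:ℝ) ≤ ‖q‖ := norm_nonneg _
  have ha0 : (0:ℝ) ≤ ‖a‖ := norm_nonneg _
  have htend : Filter.Tendsto (fun k : ℕ => ‖a‖ * ‖q‖ ^ k)
      Filter.atTop (nhds 0) := by
    have := tendsto_pow_atTop_nhds_zero_of_lt_one hq0 hq
    simpa using this.const_mul (‖a‖)
  obtain ⟨N, hN⟩ := (Filter.eventually_atTop).mp
    (htend.eventually (eventually_le_nhds (by norm_num : (0:ℝ) < 1/2)))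
  set l : ℕ → ℝ := fun k =>
    if k < N then min (‖(1 - a*q^k)‖) 1
    else Real.exp (-(2 * (‖a‖ * ‖q‖ ^ k))) with hl
  have hlpos : ∀ k, 0 < l k := by
    intro k; by_cases hk : k < N
    · simp only [hl, if_pos hk]
      exact lt_min (norm_pos_iff.mpr (h k)) one_pos
    · simp only [hl, if_neg hk]; exact Real.exp_pos _
  have hlle1 : ∀ k, l k ≤ 1 := by
    intro k; by_cases hk : k < N
    · simp only [hl, if_pos hk]; exact min_le_right _ _
    · simp only [hl, if_neg hk]
      apply Real.exp_le_one_iff.mpr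
      have : 0 ≤ 2 * (‖a‖ * ‖q‖ ^ k) := by positivity
      linarith
  have hlle : ∀ k, l k ≤ ‖(1 - a*q^k)‖ := by
    intro k; by_cases hk : k < N
    · simp only [hl, if_pos hk]; exact min_le_left _ _
    · simp only [hl, if_neg hk]
      have hk' : ‖a‖ * ‖q‖ ^ k ≤ 1/2 := hN k (le_of_not_gt hk)
      have hx0 : 0 ≤ ‖a‖ * ‖q‖ ^ k := by positivity
      have h1 : Real.exp (-(2 * (‖a‖ * ‖q‖ ^ k)))
          ≤ 1 - ‖a‖ * ‖q‖ ^ k := aux_exp_lb hx0 hk'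
      have h2 : 1 - ‖a‖ * ‖q‖ ^ k ≤ ‖(1 - a*q^k)‖ := by
        have h3 := norm_add_le (1 - a*q^k) (a*q^k)
        simp only [sub_add_cancel, norm_one] at h3
        rw [norm_mul, norm_pow] at h3
        linarith
      linarith
  set C : ℝ := (∏ k ∈ range N, l k) * Real.exp (-(2 * (‖a‖ * (1 - ‖q‖)⁻¹)))
    with hC
  have hprodpos : ∀ n, 0 < ∏ k ∈ range n, l k := fun n => prod_pos (fun k _ => hlpos k)
  have hCpos : 0 < C := mul_pos (hprodpos N) (Real.exp_pos _)
  refine ⟨C, hCpos, fun n => ?_⟩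
  have key : C ≤ ∏ k ∈ range (N + n), l k := by
    rw [prod_range_add]
    have e2 : ∀ k ∈ range n, l (N + k) = Real.exp (-(2 * (‖a‖ * ‖q‖ ^ (N+k)))) := by
      intro k _; simp only [hl, if_neg (by omega : ¬ N + k < N)]
    rw [prod_congr rfl e2, ← Real.exp_sum]
    apply mul_le_mul_of_nonneg_left _ (le_of_lt (hprodpos N))
    apply Real.exp_le_exp.mpr
    have : ∑ k ∈ range n, (2 * (‖a‖ * ‖q‖ ^ (N + k)))
        ≤ 2 * (‖a‖ * (1 - ‖q‖)⁻¹) := by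
      have hterm : ∀ k ∈ range n, 2 * (‖a‖ * ‖q‖ ^ (N + k))
          ≤ 2 * ‖a‖ * ‖q‖ ^ k := by
        intro k _
        have : ‖q‖ ^ (N + k) ≤ ‖q‖ ^ k := by
          exact pow_le_pow_of_le_one hq0 (le_of_lt hq) (by omega)
        nlinarith
      calc ∑ k ∈ range n, (2 * (‖a‖ * ‖q‖ ^ (N + k)))
          ≤ ∑ k ∈ range n, 2 * ‖a‖ * ‖q‖ ^ k := sum_le_sum hterm
        _ = 2 * ‖a‖ * ∑ k ∈ range n, ‖q‖ ^ k := by rw [mul_sum]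
        _ ≤ 2 * ‖a‖ * (1 - ‖q‖)⁻¹ := by
            apply mul_le_mul_of_nonneg_left (aux_geom_sum_le hq0 hq n) (by positivity)
        _ = 2 * (‖a‖ * (1 - ‖q‖)⁻¹) := by ring
    have e3 : ∑ x ∈ range n, -(2 * (‖a‖ * ‖q‖ ^ (N + x)))
        = -∑ x ∈ range n, (2 * (‖a‖ * ‖q‖ ^ (N + x))) := by
      rw [Finset.sum_neg_distrib]
    rw [e3]
    exact neg_le_neg this
  have mono : ∏ k ∈ range (N + n), l k ≤ ∏ k ∈ range n, l k := by
    rw [add_comm N n, prod_range_add]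
    apply mul_le_of_le_one_right (le_of_lt (hprodpos n))
    exact prod_le_one (fun k _ => le_of_lt (hlpos _)) (fun k _ => hlle1 _)
  have final : ∏ k ∈ range n, l k ≤ ‖qPoch q a n‖ := by
    rw [qPoch, norm_prod]
    exact prod_le_prod (fun k _ => le_of_lt (hlpos k)) (fun k _ => hlle k)
  linarith

lemma aux_summable_bound (A : ℕ → ℂ) (M : ℝ) (hA : ∀ n, ‖A n‖ ≤ M)
    (t : ℂ) (ht : ‖t‖ < 1) : Summable (fun n => A n * t ^ n) := by
  have ht0 : (0:ℝ) ≤ ‖t‖ := norm_nonneg _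
  apply Summable.of_norm
  apply Summable.of_nonneg_of_le (fun n => norm_nonneg _) (fun n => ?_)
    ((summable_geometric_of_lt_one ht0 ht).mul_left M)
  have : ‖A n * t ^ n‖ = ‖A n‖ * ‖t‖ ^ n := by
    rw [norm_mul, norm_pow]
  rw [this]
  exact mul_le_mul_of_nonneg_right (hA n) (by positivity)

lemma aux_master (q t : ℂ) (Φ P R : ℕ → ℂ)
    (ht : ‖t‖ < 1)
    (sΦ : Summable (fun n => Φ n * t ^ n))
    (sP : Summable (fun n => P n * (q*t) ^ n))
    (sR : Summable (fun n => R n * (q*t) ^ n))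
    (h0 : Φ 0 = P 0)
    (hrec : ∀ n : ℕ, Φ (n+1) = Φ n + q^(n+1) * P (n+1) + q^n * R n) :
    ∑' n : ℕ, Φ n * t ^ n =
      (∑' n : ℕ, P n * (q*t) ^ n) / (1 - t) + t * (∑' n : ℕ, R n * (q*t) ^ n) / (1 - t) := by
  have ht1 : (1:ℂ) - t ≠ 0 := by
    intro hcon
    have : t = 1 := by linear_combination -hcon
    rw [this] at ht; simp at ht
  have sP1 : Summable (fun n => P (n+1) * (q*t) ^ (n+1)) :=
    (summable_nat_add_iff 1).mpr sP
  have sΦt : Summable (fun n => Φ n * t ^ n * t) := sΦ.mul_right t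
  have sRt : Summable (fun n => R n * (q*t) ^ n * t) := sR.mul_right t
  set S := ∑' n : ℕ, Φ n * t ^ n with hS
  set SP := ∑' n : ℕ, P n * (q*t) ^ n with hSP
  set SR := ∑' n : ℕ, R n * (q*t) ^ n with hSR
  have step : ∀ n : ℕ, Φ (n+1) * t^(n+1)
      = Φ n * t^n * t + P (n+1) * (q*t)^(n+1) + R n * (q*t)^n * t := by
    intro n; rw [hrec n]; ring
  have main : S = P 0 + (S * t + (∑' n : ℕ, P (n+1) * (q*t)^(n+1)) + SR * t) := by
    calc S = Φ 0 * t^0 + ∑' n : ℕ, Φ (n+1) * t^(n+1) := Summable.tsum_eq_zero_add sΦ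
      _ = Φ 0 + ∑' n : ℕ, Φ (n+1) * t^(n+1) := by rw [pow_zero, mul_one]
      _ = Φ 0 + ∑' n : ℕ, (Φ n * t^n * t + P (n+1) * (q*t)^(n+1) + R n * (q*t)^n * t) := by
          rw [tsum_congr step]
      _ = Φ 0 + ((∑' n : ℕ, (Φ n * t^n * t + P (n+1) * (q*t)^(n+1)))
            + ∑' n : ℕ, R n * (q*t)^n * t) := by
          rw [Summable.tsum_add (sΦt.add sP1) sRt]
      _ = Φ 0 + ((∑' n : ℕ, Φ n * t^n * t) + (∑' n : ℕ, P (n+1) * (q*t)^(n+1))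
            + ∑' n : ℕ, R n * (q*t)^n * t) := by
          rw [Summable.tsum_add sΦt sP1]
      _ = P 0 + (S * t + (∑' n : ℕ, P (n+1) * (q*t)^(n+1)) + SR * t) := by
          rw [h0, tsum_mul_right, tsum_mul_right]
  have hPsplit : SP = P 0 * (q*t)^0 + ∑' n : ℕ, P (n+1) * (q*t)^(n+1) := Summable.tsum_eq_zero_add sP
  rw [pow_zero, mul_one] at hPsplit
  have main2 : S = SP + S * t + SR * t := by rw [hPsplit]; linear_combination main
  rw [← add_div, eq_div_iff ht1]
  linear_combination main2

def coF (q a0 a1 a2 a3 a5 : ℂ) (n : ℕ) : ℂ :=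
  qPoch q a5 n * qPoch q (a0 * a1 * a5) n * qPoch q (a0 * a1 * a2 * a3 * a5) n /
    (qPoch q (a0 * a5) n * qPoch q (a0 * a1 * a2 * a5) n * qPoch q q n)

def coG (q a0 a1 a2 a3 a5 : ℂ) (n : ℕ) : ℂ :=
  (1 - a5) / (1 - a0 * a5) *
    (qPoch q (q * a5) n * qPoch q (a0 * a1 * a5) n * qPoch q (a0 * a1 * a2 * a3 * a5) n /
      (qPoch q (q * a0 * a5) n * qPoch q (a0 * a1 * a2 * a5) n * qPoch q q n))

def coH (q a0 a1 a2 a3 a5 : ℂ) (n : ℕ) : ℂ :=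
  (1 - a5) * (1 - a0 * a1 * a5) / ((1 - a0 * a5) * (1 - a0 * a1 * a2 * a5)) *
    (qPoch q (q * a5) n * qPoch q (q * a0 * a1 * a5) n * qPoch q (a0 * a1 * a2 * a3 * a5) n /
      (qPoch q (q * a0 * a5) n * qPoch q (q * a0 * a1 * a2 * a5) n * qPoch q q n))

section algebra
set_option linter.unusedSectionVars false
variable (q a0 a1 a2 a3 a5 : ℂ)
variable (hb : ∀ m : ℕ, (1:ℂ) - a0 * a5 * q ^ m ≠ 0)
variable (hc : ∀ m : ℕ, (1:ℂ) - a0 * a1 * a2 * a5 * q ^ m ≠ 0)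
variable (hq : ∀ m : ℕ, (1:ℂ) - q * q ^ m ≠ 0)

include hb hc hq

lemma aux_coG_eq (n : ℕ) :
    coG q a0 a1 a2 a3 a5 n = coF q a0 a1 a2 a3 a5 n *
      ((1 - a5 * q ^ n) / (1 - a0 * a5 * q ^ n)) := by
  have hb0 : (1:ℂ) - a0 * a5 ≠ 0 := by simpa using hb 0
  have hqb : ∀ m : ℕ, (1:ℂ) - (q * a0 * a5) * q ^ m ≠ 0 := by
    intro m
    have e : (1:ℂ) - (q * a0 * a5) * q ^ m = 1 - a0 * a5 * q ^ (m+1) := by ring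
    rw [e]; exact hb (m+1)
  have hPb := aux_qPoch_ne_zero hb n
  have hPc := aux_qPoch_ne_zero hc n
  have hPq := aux_qPoch_ne_zero hq n
  have hPqb := aux_qPoch_ne_zero hqb n
  have h1 := aux_qPoch_shift q a5 n
  have h2 : (1 - a0 * a5) * qPoch q (q * a0 * a5) n
      = qPoch q (a0 * a5) n * (1 - a0 * a5 * q ^ n) := by
    have := aux_qPoch_shift q (a0 * a5) n
    rwa [← mul_assoc] at this
  unfold coG coF
  have hbn := hb n
  rw [div_mul_div_comm, div_mul_div_comm,
    div_eq_div_iff (mul_ne_zero hb0 (mul_ne_zero (mul_ne_zero hPqb hPc) hPq))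
      (mul_ne_zero (mul_ne_zero (mul_ne_zero hPb hPc) hPq) hbn)]
  linear_combination (qPoch q (a0*a1*a5) n * qPoch q (a0*a1*a2*a3*a5) n *
      qPoch q (a0*a5) n * qPoch q (a0*a1*a2*a5) n * qPoch q q n * (1 - a0*a5*q^n)) * h1
    - (qPoch q a5 n * (1 - a5*q^n) * qPoch q (a0*a1*a5) n * qPoch q (a0*a1*a2*a3*a5) n *
      qPoch q (a0*a1*a2*a5) n * qPoch q q n) * h2

lemma aux_coH_eq (n : ℕ) :
    coH q a0 a1 a2 a3 a5 n = coF q a0 a1 a2 a3 a5 n *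
      ((1 - a5 * q ^ n) * (1 - a0 * a1 * a5 * q ^ n) /
        ((1 - a0 * a5 * q ^ n) * (1 - a0 * a1 * a2 * a5 * q ^ n))) := by
  have hb0 : (1:ℂ) - a0 * a5 ≠ 0 := by simpa using hb 0
  have hc0 : (1:ℂ) - a0 * a1 * a2 * a5 ≠ 0 := by simpa using hc 0
  have hqb : ∀ m : ℕ, (1:ℂ) - (q * a0 * a5) * q ^ m ≠ 0 := by
    intro m
    have e : (1:ℂ) - (q * a0 * a5) * q ^ m = 1 - a0 * a5 * q ^ (m+1) := by ring
    rw [e]; exact hb (m+1)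
  have hqc : ∀ m : ℕ, (1:ℂ) - (q * a0 * a1 * a2 * a5) * q ^ m ≠ 0 := by
    intro m
    have e : (1:ℂ) - (q * a0 * a1 * a2 * a5) * q ^ m = 1 - a0 * a1 * a2 * a5 * q ^ (m+1) := by
      ring
    rw [e]; exact hc (m+1)
  have hPb := aux_qPoch_ne_zero hb n
  have hPc := aux_qPoch_ne_zero hc n
  have hPq := aux_qPoch_ne_zero hq n
  have hPqb := aux_qPoch_ne_zero hqb n
  have hPqc := aux_qPoch_ne_zero hqc n
  have hbn := hb n
  have hcn := hc n
  have h1 := aux_qPoch_shift q a5 n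
  have h3 : (1 - a0 * a1 * a5) * qPoch q (q * a0 * a1 * a5) n
      = qPoch q (a0 * a1 * a5) n * (1 - a0 * a1 * a5 * q ^ n) := by
    have := aux_qPoch_shift q (a0 * a1 * a5) n
    rwa [← mul_assoc, ← mul_assoc] at this
  have h2 : (1 - a0 * a5) * qPoch q (q * a0 * a5) n
      = qPoch q (a0 * a5) n * (1 - a0 * a5 * q ^ n) := by
    have := aux_qPoch_shift q (a0 * a5) n
    rwa [← mul_assoc] at this
  have h4 : (1 - a0 * a1 * a2 * a5) * qPoch q (q * a0 * a1 * a2 * a5) n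
      = qPoch q (a0 * a1 * a2 * a5) n * (1 - a0 * a1 * a2 * a5 * q ^ n) := by
    have := aux_qPoch_shift q (a0 * a1 * a2 * a5) n
    rwa [← mul_assoc, ← mul_assoc, ← mul_assoc] at this
  unfold coH coF
  rw [div_mul_div_comm, div_mul_div_comm,
    div_eq_div_iff (mul_ne_zero (mul_ne_zero hb0 hc0) (mul_ne_zero (mul_ne_zero hPqb hPqc) hPq))
      (mul_ne_zero (mul_ne_zero (mul_ne_zero hPb hPc) hPq) (mul_ne_zero hbn hcn))]
  linear_combination (((1 - a0*a1*a5) * qPoch q (q*a0*a1*a5) n) * qPoch q (a0*a1*a2*a3*a5) n * (qPoch q (a0*a5) n * qPoch q (a0*a1*a2*a5) n * qPoch q q n) * ((1 - a0*a5*q^n) * (1 - a0*a1*a2*a5*q^n))) * h1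
    + ((qPoch q a5 n * (1 - a5*q^n)) * qPoch q (a0*a1*a2*a3*a5) n * (qPoch q (a0*a5) n * qPoch q (a0*a1*a2*a5) n * qPoch q q n) * ((1 - a0*a5*q^n) * (1 - a0*a1*a2*a5*q^n))) * h3
    - ((qPoch q a5 n * qPoch q (a0*a1*a5) n * qPoch q (a0*a1*a2*a3*a5) n) * ((1 - a5*q^n) * (1 - a0*a1*a5*q^n)) * qPoch q q n * ((1 - a0*a1*a2*a5) * qPoch q (q*a0*a1*a2*a5) n)) * h2
    - ((qPoch q a5 n * qPoch q (a0*a1*a5) n * qPoch q (a0*a1*a2*a3*a5) n) * ((1 - a5*q^n) * (1 - a0*a1*a5*q^n)) * qPoch q q n * (qPoch q (a0*a5) n * (1 - a0*a5*q^n))) * h4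

lemma aux_coF_succ (n : ℕ) :
    coF q a0 a1 a2 a3 a5 (n+1) = coF q a0 a1 a2 a3 a5 n *
      ((1 - a5 * q ^ n) * (1 - a0 * a1 * a5 * q ^ n) * (1 - a0 * a1 * a2 * a3 * a5 * q ^ n)) /
      ((1 - a0 * a5 * q ^ n) * (1 - a0 * a1 * a2 * a5 * q ^ n) * (1 - q * q ^ n)) := by
  have hPb := aux_qPoch_ne_zero hb n
  have hPc := aux_qPoch_ne_zero hc n
  have hPq := aux_qPoch_ne_zero hq n
  have hbn := hb n
  have hcn := hc n
  have hqn := hq n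
  unfold coF
  simp only [aux_qPoch_succ]
  field_simp

lemma aux_rec1 (n : ℕ) :
    coF q a0 a1 a2 a3 a5 (n+1) = coF q a0 a1 a2 a3 a5 n
      + q^(n+1) * coF q a0 a1 a2 a3 a5 (n+1)
      + q^n * (-a5 * coF q a0 a1 a2 a3 a5 n
          + a0 * a5 * (1 - a1) * coG q a0 a1 a2 a3 a5 n
          + a0 * a1 * a2 * a5 * (1 - a3) * coH q a0 a1 a2 a3 a5 n) := by
  have hbn := hb n
  have hcn := hc n
  have hqn := hq n
  have eG := aux_coG_eq q a0 a1 a2 a3 a5 hb hc hq n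
  have eH := aux_coH_eq q a0 a1 a2 a3 a5 hb hc hq n
  have eF := aux_coF_succ q a0 a1 a2 a3 a5 hb hc hq n
  have mG : coG q a0 a1 a2 a3 a5 n * (1 - a0*a5*q^n)
      = coF q a0 a1 a2 a3 a5 n * (1 - a5*q^n) := by
    rw [eG, mul_assoc, div_mul_cancel₀ _ hbn]
  have mH : coH q a0 a1 a2 a3 a5 n * ((1 - a0*a5*q^n) * (1 - a0*a1*a2*a5*q^n))
      = coF q a0 a1 a2 a3 a5 n * ((1 - a5*q^n) * (1 - a0*a1*a5*q^n)) := by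
    rw [eH, mul_assoc, div_mul_cancel₀ _ (mul_ne_zero hbn hcn)]
  have mF1 : coF q a0 a1 a2 a3 a5 (n+1)
        * ((1 - a0*a5*q^n) * (1 - a0*a1*a2*a5*q^n) * (1 - q*q^n))
      = coF q a0 a1 a2 a3 a5 n
        * ((1 - a5*q^n) * (1 - a0*a1*a5*q^n) * (1 - a0*a1*a2*a3*a5*q^n)) := by
    rw [eF, div_mul_cancel₀ _ (mul_ne_zero (mul_ne_zero hbn hcn) hqn)]
  have hD : ((1 - a0*a5*q^n) * (1 - a0*a1*a2*a5*q^n) * (1 - q*q^n)) ≠ 0 :=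
    mul_ne_zero (mul_ne_zero hbn hcn) hqn
  apply mul_left_cancel₀ hD
  linear_combination (1 - q*q^n) * mF1
    - (q^n * (a0*a5*(1-a1)) * (1 - a0*a1*a2*a5*q^n) * (1 - q*q^n)) * mG
    - (q^n * (a0*a1*a2*a5*(1-a3)) * (1 - q*q^n)) * mH

lemma aux_rec2 (n : ℕ) :
    coG q a0 a1 a2 a3 a5 (n+1) = coG q a0 a1 a2 a3 a5 n
      + q^(n+1) * ((1 - a5) * coF q a0 a1 a2 a3 a5 (n+1)
          + a0 * a5 * coG q a0 a1 a2 a3 a5 (n+1))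
      + q^n * (-(a0 * a1 * a5) * coG q a0 a1 a2 a3 a5 n
          + a0 * a1 * a2 * a5 * (1 - a3) * coH q a0 a1 a2 a3 a5 n) := by
  have hbn := hb n
  have hcn := hc n
  have hqn := hq n
  have hbn1 := hb (n+1)
  rw [pow_succ] at hbn1
  have eG := aux_coG_eq q a0 a1 a2 a3 a5 hb hc hq n
  have eH := aux_coH_eq q a0 a1 a2 a3 a5 hb hc hq n
  have eF := aux_coF_succ q a0 a1 a2 a3 a5 hb hc hq n
  have eG1 := aux_coG_eq q a0 a1 a2 a3 a5 hb hc hq (n+1)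
  rw [pow_succ] at eG1
  have mG : coG q a0 a1 a2 a3 a5 n * (1 - a0*a5*q^n)
      = coF q a0 a1 a2 a3 a5 n * (1 - a5*q^n) := by
    rw [eG, mul_assoc, div_mul_cancel₀ _ hbn]
  have mH : coH q a0 a1 a2 a3 a5 n * ((1 - a0*a5*q^n) * (1 - a0*a1*a2*a5*q^n))
      = coF q a0 a1 a2 a3 a5 n * ((1 - a5*q^n) * (1 - a0*a1*a5*q^n)) := by
    rw [eH, mul_assoc, div_mul_cancel₀ _ (mul_ne_zero hbn hcn)]
  have mF1 : coF q a0 a1 a2 a3 a5 (n+1)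
        * ((1 - a0*a5*q^n) * (1 - a0*a1*a2*a5*q^n) * (1 - q*q^n))
      = coF q a0 a1 a2 a3 a5 n
        * ((1 - a5*q^n) * (1 - a0*a1*a5*q^n) * (1 - a0*a1*a2*a3*a5*q^n)) := by
    rw [eF, div_mul_cancel₀ _ (mul_ne_zero (mul_ne_zero hbn hcn) hqn)]
  have mG1 : coG q a0 a1 a2 a3 a5 (n+1) * (1 - a0*a5*(q^n*q))
      = coF q a0 a1 a2 a3 a5 (n+1) * (1 - a5*(q^n*q)) := by
    rw [eG1, mul_assoc, div_mul_cancel₀ _ hbn1]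
  have hD : ((1 - a0*a5*q^n) * (1 - a0*a1*a2*a5*q^n) * (1 - q*q^n) * (1 - a0*a5*(q^n*q)))
      ≠ 0 := mul_ne_zero (mul_ne_zero (mul_ne_zero hbn hcn) hqn) hbn1
  apply mul_left_cancel₀ hD
  simp only [pow_succ]
  linear_combination
    ((1 - a0*a5*q^n) * (1 - a0*a1*a2*a5*q^n) * (1 - q*q^n) * (1 - a0*a5*(q^n*q))) * mG1
    + ((a0*a1*a5*q^n - 1) * (1 - a0*a1*a2*a5*q^n) * (1 - q*q^n) * (1 - a0*a5*(q^n*q))) * mG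
    + (-(q^n) * (a0*a1*a2*a5) * (1-a3) * (1 - q*q^n) * (1 - a0*a5*(q^n*q))) * mH
    + ((1 - a0*a5*(q^n*q)) * ((1 - a5*(q^n*q)) - q^n*q*(1-a5))) * mF1

lemma aux_rec3 (n : ℕ) :
    coH q a0 a1 a2 a3 a5 (n+1) = coH q a0 a1 a2 a3 a5 n
      + q^(n+1) * ((1 - a5) * coF q a0 a1 a2 a3 a5 (n+1)
          + a0 * a5 * (1 - a1) * coG q a0 a1 a2 a3 a5 (n+1)
          + a0 * a1 * a2 * a5 * coH q a0 a1 a2 a3 a5 (n+1))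
      + q^n * (-(a0 * a1 * a2 * a3 * a5) * coH q a0 a1 a2 a3 a5 n) := by
  have hbn := hb n
  have hcn := hc n
  have hqn := hq n
  have hbn1 := hb (n+1)
  have hcn1 := hc (n+1)
  rw [pow_succ] at hbn1 hcn1
  have eH := aux_coH_eq q a0 a1 a2 a3 a5 hb hc hq n
  have eF := aux_coF_succ q a0 a1 a2 a3 a5 hb hc hq n
  have eG1 := aux_coG_eq q a0 a1 a2 a3 a5 hb hc hq (n+1)
  have eH1 := aux_coH_eq q a0 a1 a2 a3 a5 hb hc hq (n+1)
  rw [pow_succ] at eG1 eH1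
  have mH : coH q a0 a1 a2 a3 a5 n * ((1 - a0*a5*q^n) * (1 - a0*a1*a2*a5*q^n))
      = coF q a0 a1 a2 a3 a5 n * ((1 - a5*q^n) * (1 - a0*a1*a5*q^n)) := by
    rw [eH, mul_assoc, div_mul_cancel₀ _ (mul_ne_zero hbn hcn)]
  have mF1 : coF q a0 a1 a2 a3 a5 (n+1)
        * ((1 - a0*a5*q^n) * (1 - a0*a1*a2*a5*q^n) * (1 - q*q^n))
      = coF q a0 a1 a2 a3 a5 n
        * ((1 - a5*q^n) * (1 - a0*a1*a5*q^n) * (1 - a0*a1*a2*a3*a5*q^n)) := by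
    rw [eF, div_mul_cancel₀ _ (mul_ne_zero (mul_ne_zero hbn hcn) hqn)]
  have mG1 : coG q a0 a1 a2 a3 a5 (n+1) * (1 - a0*a5*(q^n*q))
      = coF q a0 a1 a2 a3 a5 (n+1) * (1 - a5*(q^n*q)) := by
    rw [eG1, mul_assoc, div_mul_cancel₀ _ hbn1]
  have mH1 : coH q a0 a1 a2 a3 a5 (n+1)
        * ((1 - a0*a5*(q^n*q)) * (1 - a0*a1*a2*a5*(q^n*q)))
      = coF q a0 a1 a2 a3 a5 (n+1) * ((1 - a5*(q^n*q)) * (1 - a0*a1*a5*(q^n*q))) := by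
    rw [eH1, mul_assoc, div_mul_cancel₀ _ (mul_ne_zero hbn1 hcn1)]
  have hD : ((1 - a0*a5*q^n) * (1 - a0*a1*a2*a5*q^n) * (1 - q*q^n)
      * (1 - a0*a5*(q^n*q)) * (1 - a0*a1*a2*a5*(q^n*q))) ≠ 0 :=
    mul_ne_zero (mul_ne_zero (mul_ne_zero (mul_ne_zero hbn hcn) hqn) hbn1) hcn1
  apply mul_left_cancel₀ hD
  simp only [pow_succ]
  linear_combination
    ((1 - a0*a5*q^n) * (1 - a0*a1*a2*a5*q^n) * (1 - q*q^n) * (1 - a0*a1*a2*a5*(q^n*q))) * mH1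
    + ((a0*a1*a2*a3*a5*q^n - 1) * (1 - q*q^n) * (1 - a0*a5*(q^n*q))
        * (1 - a0*a1*a2*a5*(q^n*q))) * mH
    + (-(q^n*q) * (a0*a5) * (1-a1) * (1 - a0*a5*q^n) * (1 - a0*a1*a2*a5*q^n) * (1 - q*q^n)
        * (1 - a0*a1*a2*a5*(q^n*q))) * mG1
    + ((1 - a0*a5*(q^n*q)) * (1 - a0*a1*a2*a5*(q^n*q)) * (-(q^n*q) * (1-a5))
        + (1 - a0*a1*a2*a5*(q^n*q)) * (1 - a5*(q^n*q)) * (1 - a0*a1*a5*(q^n*q))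
        - (q^n*q) * (a0*a5) * (1-a1) * (1 - a0*a1*a2*a5*(q^n*q)) * (1 - a5*(q^n*q))) * mF1

lemma aux_h0_2 :
    coG q a0 a1 a2 a3 a5 0 = (1 - a5) * coF q a0 a1 a2 a3 a5 0
      + a0 * a5 * coG q a0 a1 a2 a3 a5 0 := by
  have hb0 : (1:ℂ) - a0 * a5 ≠ 0 := by simpa using hb 0
  unfold coF coG qPoch
  simp only [Finset.range_zero, Finset.prod_empty]
  simp only [mul_one, div_one, div_eq_mul_inv, inv_one]
  linear_combination (1 - a5) * mul_inv_cancel₀ hb0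

lemma aux_h0_3 :
    coH q a0 a1 a2 a3 a5 0 = (1 - a5) * coF q a0 a1 a2 a3 a5 0
      + a0 * a5 * (1 - a1) * coG q a0 a1 a2 a3 a5 0
      + a0 * a1 * a2 * a5 * coH q a0 a1 a2 a3 a5 0 := by
  have hb0 : (1:ℂ) - a0 * a5 ≠ 0 := by simpa using hb 0
  have hc0 : (1:ℂ) - a0 * a1 * a2 * a5 ≠ 0 := by simpa using hc 0
  unfold coF coG coH qPoch
  simp only [Finset.range_zero, Finset.prod_empty]
  simp only [mul_one, div_one, div_eq_mul_inv, inv_one, mul_inv]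
  linear_combination ((1 - a5) * (1 - a0 * a1 * a5) * (1 - a0 * a5)⁻¹) * mul_inv_cancel₀ hc0
    + (1 - a5) * mul_inv_cancel₀ hb0
end algebra

lemma aux_bound (q A B C D E : ℂ) (hq1 : ‖q‖ < 1)
    (hD : ∀ m : ℕ, (1:ℂ) - D * q ^ m ≠ 0) (hE : ∀ m : ℕ, (1:ℂ) - E * q ^ m ≠ 0)
    (hqm : ∀ m : ℕ, (1:ℂ) - q * q ^ m ≠ 0) :
    ∃ M : ℝ, ∀ n, ‖(qPoch q A n * qPoch q B n * qPoch q C n /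
      (qPoch q D n * qPoch q E n * qPoch q q n))‖ ≤ M := by
  obtain ⟨cD, hcD0, hcD⟩ := aux_qPoch_abs_lower q D hq1 hD
  obtain ⟨cE, hcE0, hcE⟩ := aux_qPoch_abs_lower q E hq1 hE
  obtain ⟨cq, hcq0, hcq⟩ := aux_qPoch_abs_lower q q hq1 hqm
  set EA := Real.exp (‖A‖ * (1 - ‖q‖)⁻¹) with hEA
  set EB := Real.exp (‖B‖ * (1 - ‖q‖)⁻¹) with hEB
  set EC := Real.exp (‖C‖ * (1 - ‖q‖)⁻¹) with hEC
  refine ⟨EA * EB * EC / (cD * cE * cq), fun n => ?_⟩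
  rw [norm_div, norm_mul, norm_mul, norm_mul, norm_mul]
  have hnum : ‖qPoch q A n‖ * ‖qPoch q B n‖ * ‖qPoch q C n‖
      ≤ EA * EB * EC := by
    have h1 : ‖qPoch q A n‖ * ‖qPoch q B n‖ ≤ EA * EB :=
      mul_le_mul (aux_qPoch_abs_le q A hq1 n) (aux_qPoch_abs_le q B hq1 n)
        (norm_nonneg _) (le_of_lt (Real.exp_pos _))
    exact mul_le_mul h1 (aux_qPoch_abs_le q C hq1 n) (norm_nonneg _)
      (by positivity)
  have hden : cD * cE * cq
      ≤ ‖qPoch q D n‖ * ‖qPoch q E n‖ * ‖qPoch q q n‖ := by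
    have h1 : cD * cE ≤ ‖qPoch q D n‖ * ‖qPoch q E n‖ :=
      mul_le_mul (hcD n) (hcE n) (le_of_lt hcE0) (norm_nonneg _)
    exact mul_le_mul h1 (hcq n) (le_of_lt hcq0) (by positivity)
  exact div_le_div₀ (by positivity) hnum (by positivity) hden

lemma aux_combo1 (x c : ℂ) (f : ℕ → ℂ) :
    c * ∑' n : ℕ, f n * x ^ n = ∑' n : ℕ, (c * f n) * x ^ n := by
  rw [← tsum_mul_left]
  exact tsum_congr fun n => by ring

lemma aux_combo2 (x c1 c2 : ℂ) (f g : ℕ → ℂ)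
    (hf : Summable fun n => f n * x ^ n) (hg : Summable fun n => g n * x ^ n) :
    c1 * (∑' n : ℕ, f n * x ^ n) + c2 * (∑' n : ℕ, g n * x ^ n)
      = ∑' n : ℕ, (c1 * f n + c2 * g n) * x ^ n := by
  rw [← tsum_mul_left, ← tsum_mul_left, ← Summable.tsum_add (hf.mul_left c1) (hg.mul_left c2)]
  exact tsum_congr fun n => by ring

lemma aux_combo3 (x c1 c2 c3 : ℂ) (f g h : ℕ → ℂ)
    (hf : Summable fun n => f n * x ^ n) (hg : Summable fun n => g n * x ^ n)
    (hh : Summable fun n => h n * x ^ n) :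
    c1 * (∑' n : ℕ, f n * x ^ n) + c2 * (∑' n : ℕ, g n * x ^ n)
        + c3 * (∑' n : ℕ, h n * x ^ n)
      = ∑' n : ℕ, (c1 * f n + c2 * g n + c3 * h n) * x ^ n := by
  rw [← tsum_mul_left, ← tsum_mul_left, ← tsum_mul_left,
    ← Summable.tsum_add (hf.mul_left c1) (hg.mul_left c2),
    ← Summable.tsum_add ((hf.mul_left c1).add (hg.mul_left c2)) (hh.mul_left c3)]
  exact tsum_congr fun n => by ring

/-- The vector `x(t) = (x₀(t), x₁(t), x₂(t))ᵀ` built from `₃φ₂` series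
satisfies the linear `q`-difference system `x(q⁻¹t) = (A₀/(1-t) + tA₁/(1-t)) x(t)` of the
`q`-Garnier system of fourth order, for `|t| < 1`. -/
theorem phi32_solves_linear_system (q a0 a1 a2 a3 a4 a5 : ℂ)
    (hq0 : 0 < ‖q‖) (hq1 : ‖q‖ < 1)
    (hres : ∀ m : ℕ, a0 * a5 * q ^ m ≠ 1 ∧ a0 * a1 * a2 * a5 * q ^ m ≠ 1) :
    ∀ t : ℂ, ‖t‖ < 1 →
      (X0 q a0 a1 a2 a3 a5 (q⁻¹ * t) =
        X0 q a0 a1 a2 a3 a5 t / (1 - t)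
          + t * (-a5 * X0 q a0 a1 a2 a3 a5 t + a0 * a5 * (1 - a1) * X1 q a0 a1 a2 a3 a5 t
              + a0 * a1 * a2 * a5 * (1 - a3) * X2 q a0 a1 a2 a3 a5 t) / (1 - t)) ∧
      (X1 q a0 a1 a2 a3 a5 (q⁻¹ * t) =
        ((1 - a5) * X0 q a0 a1 a2 a3 a5 t + a0 * a5 * X1 q a0 a1 a2 a3 a5 t) / (1 - t)
          + t * (-(a0 * a1 * a5) * X1 q a0 a1 a2 a3 a5 t
              + a0 * a1 * a2 * a5 * (1 - a3) * X2 q a0 a1 a2 a3 a5 t) / (1 - t)) ∧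
      (X2 q a0 a1 a2 a3 a5 (q⁻¹ * t) =
        ((1 - a5) * X0 q a0 a1 a2 a3 a5 t + a0 * a5 * (1 - a1) * X1 q a0 a1 a2 a3 a5 t
            + a0 * a1 * a2 * a5 * X2 q a0 a1 a2 a3 a5 t) / (1 - t)
          + t * (-(a0 * a1 * a2 * a3 * a5) * X2 q a0 a1 a2 a3 a5 t) / (1 - t)) := by
  intro t ht
  have hq' : q ≠ 0 := by
    intro h; rw [h] at hq0; simp at hq0
  have hb : ∀ m : ℕ, (1:ℂ) - a0 * a5 * q ^ m ≠ 0 := by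
    intro m hcon; exact (hres m).1 (by linear_combination -hcon)
  have hc : ∀ m : ℕ, (1:ℂ) - a0 * a1 * a2 * a5 * q ^ m ≠ 0 := by
    intro m hcon; exact (hres m).2 (by linear_combination -hcon)
  have habsq : ∀ m : ℕ, ‖(q * q ^ m)‖ < 1 := by
    intro m
    rw [norm_mul, norm_pow]
    have h1 : ‖q‖ ^ m ≤ 1 :=
      pow_le_one₀ (norm_nonneg _) (le_of_lt hq1)
    nlinarith [norm_nonneg q]
  have hqm : ∀ m : ℕ, (1:ℂ) - q * q ^ m ≠ 0 := by
    intro m hcon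
    have h1 : q * q ^ m = 1 := by linear_combination -hcon
    have h2 := habsq m
    rw [h1] at h2; simp at h2
  have hqb : ∀ m : ℕ, (1:ℂ) - (q * a0 * a5) * q ^ m ≠ 0 := by
    intro m
    have e : (1:ℂ) - (q * a0 * a5) * q ^ m = 1 - a0 * a5 * q ^ (m+1) := by ring
    rw [e]; exact hb (m+1)
  have hqc : ∀ m : ℕ, (1:ℂ) - (q * a0 * a1 * a2 * a5) * q ^ m ≠ 0 := by
    intro m
    have e : (1:ℂ) - (q * a0 * a1 * a2 * a5) * q ^ m
        = 1 - a0 * a1 * a2 * a5 * q ^ (m+1) := by ring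
    rw [e]; exact hc (m+1)
  have hqt : ‖(q * t)‖ < 1 := by
    rw [norm_mul]
    nlinarith [norm_nonneg q, norm_nonneg t]
  obtain ⟨MF, hMF⟩ := aux_bound q a5 (a0*a1*a5) (a0*a1*a2*a3*a5) (a0*a5) (a0*a1*a2*a5)
    hq1 hb hc hqm
  obtain ⟨MG, hMG⟩ := aux_bound q (q*a5) (a0*a1*a5) (a0*a1*a2*a3*a5) (q*a0*a5) (a0*a1*a2*a5)
    hq1 hqb hc hqm
  obtain ⟨MH, hMH⟩ := aux_bound q (q*a5) (q*a0*a1*a5) (a0*a1*a2*a3*a5) (q*a0*a5)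
    (q*a0*a1*a2*a5) hq1 hqb hqc hqm
  have bF : ∀ n, ‖coF q a0 a1 a2 a3 a5 n‖ ≤ MF := fun n => hMF n
  have bG : ∀ n, ‖coG q a0 a1 a2 a3 a5 n‖
      ≤ ‖((1 - a5) / (1 - a0 * a5))‖ * MG := by
    intro n
    simp only [coG, norm_mul]
    exact mul_le_mul_of_nonneg_left (hMG n) (norm_nonneg _)
  have bH : ∀ n, ‖coH q a0 a1 a2 a3 a5 n‖
      ≤ ‖(1 - a5) * (1 - a0*a1*a5) / ((1 - a0*a5) * (1 - a0*a1*a2*a5))‖ * MH := by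
    intro n
    simp only [coH, norm_mul]
    exact mul_le_mul_of_nonneg_left (hMH n) (norm_nonneg _)
  have sF_t := aux_summable_bound _ _ bF t ht
  have sF_qt := aux_summable_bound _ _ bF (q*t) hqt
  have sG_t := aux_summable_bound _ _ bG t ht
  have sG_qt := aux_summable_bound _ _ bG (q*t) hqt
  have sH_t := aux_summable_bound _ _ bH t ht
  have sH_qt := aux_summable_bound _ _ bH (q*t) hqt
  have X0r : ∀ s : ℂ, X0 q a0 a1 a2 a3 a5 s = ∑' n : ℕ, coF q a0 a1 a2 a3 a5 n * (q*s)^n :=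
    fun s => rfl
  have X1r : ∀ s : ℂ, X1 q a0 a1 a2 a3 a5 s = ∑' n : ℕ, coG q a0 a1 a2 a3 a5 n * (q*s)^n := by
    intro s
    unfold X1 phi32 coG
    rw [← tsum_mul_left]
    exact tsum_congr fun n => by ring
  have X2r : ∀ s : ℂ, X2 q a0 a1 a2 a3 a5 s = ∑' n : ℕ, coH q a0 a1 a2 a3 a5 n * (q*s)^n := by
    intro s
    unfold X2 phi32 coH
    rw [← tsum_mul_left]
    exact tsum_congr fun n => by ring
  have harg : q * (q⁻¹ * t) = t := by field_simp
  refine ⟨?_, ?_, ?_⟩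
  · simp only [X0r, X1r, X2r]
    rw [harg,
      aux_combo3 (q*t) (-a5) (a0*a5*(1-a1)) (a0*a1*a2*a5*(1-a3)) _ _ _ sF_qt sG_qt sH_qt]
    exact aux_master q t _ _ _ ht sF_t sF_qt
      ((((sF_qt.mul_left (-a5)).add (sG_qt.mul_left (a0*a5*(1-a1)))).add
        (sH_qt.mul_left (a0*a1*a2*a5*(1-a3)))).congr (fun n => by ring))
      rfl (aux_rec1 q a0 a1 a2 a3 a5 hb hc hqm)
  · simp only [X0r, X1r, X2r]
    rw [harg,
      aux_combo2 (q*t) (1-a5) (a0*a5) _ _ sF_qt sG_qt,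
      aux_combo2 (q*t) (-(a0*a1*a5)) (a0*a1*a2*a5*(1-a3)) _ _ sG_qt sH_qt]
    exact aux_master q t _ _ _ ht sG_t
      (((sF_qt.mul_left (1-a5)).add (sG_qt.mul_left (a0*a5))).congr (fun n => by ring))
      (((sG_qt.mul_left (-(a0*a1*a5))).add
        (sH_qt.mul_left (a0*a1*a2*a5*(1-a3)))).congr (fun n => by ring))
      (aux_h0_2 q a0 a1 a2 a3 a5 hb hc hqm) (aux_rec2 q a0 a1 a2 a3 a5 hb hc hqm)
  · simp only [X0r, X1r, X2r]
    rw [harg,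
      aux_combo3 (q*t) (1-a5) (a0*a5*(1-a1)) (a0*a1*a2*a5) _ _ _ sF_qt sG_qt sH_qt,
      aux_combo1 (q*t) (-(a0*a1*a2*a3*a5)) _]
    exact aux_master q t _ _ _ ht sH_t
      ((((sF_qt.mul_left (1-a5)).add (sG_qt.mul_left (a0*a5*(1-a1)))).add
        (sH_qt.mul_left (a0*a1*a2*a5))).congr (fun n => by ring))
      ((sH_qt.mul_left (-(a0*a1*a2*a3*a5))).congr (fun n => by ring))
      (aux_h0_3 q a0 a1 a2 a3 a5 hb hc hqm) (aux_rec3 q a0 a1 a2 a3 a5 hb hc hqm)
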